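/- Let F be a group, G a finite group, H ≤ G, and deg : F → ℤ a surjective homomorphism. Suppose Φ is a set of homomorphisms F → G such that: (I) for every h ∈ H and φ ∈ Φ, the map f ↦ h⁻¹ φ(f) h is in Φ; and (II) for every φ ∈ Φ and every h in the φ-core H_φ = (⋂_{f ∈ F} φ(f)⁻¹ H φ(f)) ∩ C_G(φ(ker deg)), and every f₁ ∈ F with deg f₁ = 1, the homomorphism ψ with ψ = φ on ker(deg) and ψ(f₁) = φ(f₁)h lies in Φ. Then the cardinality of Φ is divisible by |H|. -/

import Mathlib

/-- The φ-core of `H`: elements `h` with `φ f * h * (φ f)⁻¹ ∈ H` for all `f`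
(i.e. `h ∈ H ^ φ(f) = φ(f)⁻¹ H φ(f)` for all `f`) which moreover commute with
`φ(ker deg)`. -/
def phiCore {F G : Type*} [Group F] [Group G] (H : Subgroup G)
    (deg : F →* Multiplicative ℤ) (φ : F →* G) : Set G :=
  {h : G | (∀ f : F, φ f * h * (φ f)⁻¹ ∈ H) ∧ ∀ f ∈ deg.ker, Commute h (φ f)}

namespace KMProof

variable {F G : Type*} [Group F] [Group G]

variable (H : Subgroup G) (deg : F →* Multiplicative ℤ)

/-- phiCore as a subgroup -/
def Kgrp (φ : F →* G) : Subgroup G where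
  carrier := phiCore H deg φ
  one_mem' := ⟨fun f => by simpa using H.one_mem, fun f _ => Commute.one_left _⟩
  mul_mem' := by
    rintro a b ⟨ha1, ha2⟩ ⟨hb1, hb2⟩
    refine ⟨fun f => ?_, fun f hf => (ha2 f hf).mul_left (hb2 f hf)⟩
    have := H.mul_mem (ha1 f) (hb1 f)
    simpa [mul_assoc] using this
  inv_mem' := by
    rintro a ⟨ha1, ha2⟩
    refine ⟨fun f => ?_, fun f hf => (ha2 f hf).inv_left⟩
    have := H.inv_mem (ha1 f)
    simpa [mul_assoc] using this

lemma Kgrp_le : Kgrp H deg φ ≤ H := by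
  intro x hx
  have := hx.1 1
  simpa using this

variable {deg}

variable {f₁ : F} (hf₁ : deg f₁ = Multiplicative.ofAdd 1)

/-- the integer degree -/
abbrev nn (deg : F →* Multiplicative ℤ) (f : F) : ℤ := Multiplicative.toAdd (deg f)

lemma mem_ker_iff {k : F} : k ∈ deg.ker ↔ nn deg k = 0 := by
  rw [MonoidHom.mem_ker]
  constructor
  · intro h; rw [nn, h]; rfl
  · intro h
    have : Multiplicative.ofAdd (Multiplicative.toAdd (deg k)) = Multiplicative.ofAdd 0 := by
      rw [nn] at h; rw [h]
    simpa using this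


include hf₁ in
lemma nn_zpow (m : ℤ) : nn deg (f₁ ^ m) = m := by
  unfold nn
  rw [map_zpow, hf₁]
  simp

include hf₁ in
lemma decomp_mem_ker (f : F) : f * f₁ ^ (-(nn deg f)) ∈ deg.ker := by
  rw [mem_ker_iff]
  unfold nn
  rw [map_mul, map_zpow, hf₁]
  simp

include hf₁ in
/-- extensionality: homs agreeing on the kernel and at f₁ agree -/
lemma hom_ext {ψ₁ ψ₂ : F →* G} (hker : ∀ k ∈ deg.ker, ψ₁ k = ψ₂ k)
    (hf : ψ₁ f₁ = ψ₂ f₁) : ψ₁ = ψ₂ := by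
  ext f
  have h1 : f = (f * f₁ ^ (-(nn deg f))) * f₁ ^ (nn deg f) := by group
  calc ψ₁ f = ψ₁ (f * f₁ ^ (-(nn deg f))) * (ψ₁ f₁) ^ (nn deg f) := by
        rw [← map_zpow, ← map_mul, ← h1]
    _ = ψ₂ (f * f₁ ^ (-(nn deg f))) * (ψ₂ f₁) ^ (nn deg f) := by
        rw [hker _ (decomp_mem_ker hf₁ f), hf]
    _ = ψ₂ f := by rw [← map_zpow, ← map_mul, ← h1]

set_option linter.unusedSectionVars false

omit hf₁ in
lemma ker_conj {k : F} (hk : k ∈ deg.ker) (f : F) : f * k * f⁻¹ ∈ deg.ker := by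
  rw [MonoidHom.mem_ker] at hk ⊢
  rw [map_mul, map_mul, map_inv, hk, mul_one, mul_comm, inv_mul_cancel]

variable (φ : F →* G) (κ : G)

lemma conj_zpow_one (n : ℤ) (k : F) :
    (φ f₁) ^ n * φ k * ((φ f₁) ^ n)⁻¹ = φ (f₁ ^ n * k * f₁ ^ (-n)) := by
  rw [map_mul, map_mul, map_zpow, map_zpow, zpow_neg]

variable (hc : ∀ k ∈ deg.ker, Commute κ (φ k))

include hc in
omit hf₁ in
lemma conj_step (k : F) (hk : k ∈ deg.ker) :
    (φ f₁ * κ) * φ k * (φ f₁ * κ)⁻¹ = φ (f₁ * k * f₁⁻¹) := by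
  have h := (hc k hk).eq
  rw [map_mul, map_mul, map_inv]
  calc φ f₁ * κ * φ k * (φ f₁ * κ)⁻¹ = φ f₁ * (κ * φ k * κ⁻¹) * (φ f₁)⁻¹ := by group
    _ = φ f₁ * (φ k * κ * κ⁻¹) * (φ f₁)⁻¹ := by rw [h]
    _ = φ f₁ * φ k * (φ f₁)⁻¹ := by group

lemma conj_mul_aux (A x : G) (n : ℤ) :
    A ^ (n + 1) * x * (A ^ (n + 1))⁻¹ = A * (A ^ n * x * (A ^ n)⁻¹) * A⁻¹ := by group

lemma conj_mul_aux' (A x : G) (n : ℤ) :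
    A ^ (n - 1) * x * (A ^ (n - 1))⁻¹ = A⁻¹ * (A ^ n * x * (A ^ n)⁻¹) * A := by group

include hf₁ hc in
lemma conj_zpow : ∀ (n : ℤ), ∀ k ∈ deg.ker,
    (φ f₁ * κ) ^ n * φ k * ((φ f₁ * κ) ^ n)⁻¹ = φ (f₁ ^ n * k * f₁ ^ (-n)) := by
  have step2 : ∀ k ∈ deg.ker, (φ f₁ * κ)⁻¹ * φ k * (φ f₁ * κ) = φ (f₁⁻¹ * k * f₁) := by
    intro k hk
    have hk' : f₁⁻¹ * k * f₁ ∈ deg.ker := by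
      simpa using ker_conj hk f₁⁻¹
    have h := conj_step (f₁ := f₁) φ κ hc _ hk'
    have h2 : φ (f₁ * (f₁⁻¹ * k * f₁) * f₁⁻¹) = φ k := by congr 1; group
    rw [h2] at h
    rw [← h]; group
  intro n
  induction n using Int.induction_on with
  | zero => intro k hk; simp
  | succ n ih =>
    intro k hk
    have hk' : f₁ ^ (n : ℤ) * k * f₁ ^ (-(n : ℤ)) ∈ deg.ker := by
      have := ker_conj hk (f₁ ^ (n : ℤ)); simpa [zpow_neg] using this
    rw [conj_mul_aux (φ f₁ * κ) (φ k) (n : ℤ), ih k hk, conj_step φ κ hc _ hk']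
    congr 1; group
  | pred n ih =>
    intro k hk
    have hk' : f₁ ^ (-(n : ℤ)) * k * f₁ ^ (-(-(n : ℤ))) ∈ deg.ker := by
      have := ker_conj hk (f₁ ^ (-(n : ℤ))); simpa [zpow_neg] using this
    rw [conj_mul_aux' (φ f₁ * κ) (φ k) (-(n : ℤ)), ih k hk, step2 _ hk']
    congr 1; group

include hf₁ hc in
lemma B_comm (n : ℤ) (k : F) (hk : k ∈ deg.ker) :
    (((φ f₁) ^ n)⁻¹ * (φ f₁ * κ) ^ n) * φ k = φ k * (((φ f₁) ^ n)⁻¹ * (φ f₁ * κ) ^ n) := by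
  have hk' : f₁ ^ n * k * f₁ ^ (-n) ∈ deg.ker := by
    have := ker_conj hk (f₁ ^ n); simpa [zpow_neg] using this
  calc ((φ f₁) ^ n)⁻¹ * (φ f₁ * κ) ^ n * φ k
      = ((φ f₁) ^ n)⁻¹ * ((φ f₁ * κ) ^ n * φ k * ((φ f₁ * κ) ^ n)⁻¹) * (φ f₁ * κ) ^ n := by group
    _ = ((φ f₁) ^ n)⁻¹ * φ (f₁ ^ n * k * f₁ ^ (-n)) * (φ f₁ * κ) ^ n := by
        rw [conj_zpow hf₁ φ κ hc n k hk]
    _ = ((φ f₁) ^ n)⁻¹ * ((φ f₁) ^ n * φ k * ((φ f₁) ^ n)⁻¹) * (φ f₁ * κ) ^ n := by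
        rw [conj_zpow_one φ n k]
    _ = φ k * (((φ f₁) ^ n)⁻¹ * (φ f₁ * κ) ^ n) := by group

lemma aux_id (pf pk c A : G) (n m : ℤ)
    (hcomm : ((c ^ n)⁻¹ * A ^ n) * pk = pk * ((c ^ n)⁻¹ * A ^ n)) :
    (pf * (pk * c ^ m)) * ((c ^ (n + m))⁻¹ * A ^ (n + m)) =
      (pf * ((c ^ n)⁻¹ * A ^ n)) * ((pk * c ^ m) * ((c ^ m)⁻¹ * A ^ m)) := by
  have h2 : (pf * (pk * c ^ m)) * ((c ^ (n + m))⁻¹ * A ^ (n + m)) =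
      pf * (pk * ((c ^ n)⁻¹ * A ^ n)) * (c ^ m * ((c ^ m)⁻¹ * A ^ m)) := by group
  have h3 : (pf * ((c ^ n)⁻¹ * A ^ n)) * ((pk * c ^ m) * ((c ^ m)⁻¹ * A ^ m)) =
      pf * (((c ^ n)⁻¹ * A ^ n) * pk) * (c ^ m * ((c ^ m)⁻¹ * A ^ m)) := by group
  rw [h2, h3, hcomm]

/-- The twisted homomorphism -/
def tw : F →* G where
  toFun f := φ f * (((φ f₁) ^ (nn deg f))⁻¹ * (φ f₁ * κ) ^ (nn deg f))
  map_one' := by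
    have h0 : nn deg 1 = 0 := by simp [nn]
    simp [h0]
  map_mul' f g := by
    have hm : nn deg (f * g) = nn deg f + nn deg g := by simp [nn]
    have hkg := decomp_mem_ker hf₁ g
    have hgdec : φ g = φ (g * f₁ ^ (-(nn deg g))) * (φ f₁) ^ (nn deg g) := by
      rw [← map_zpow, ← map_mul]; congr 1; group
    show φ (f * g) * (((φ f₁) ^ (nn deg (f * g)))⁻¹ * (φ f₁ * κ) ^ (nn deg (f * g))) =
      (φ f * (((φ f₁) ^ (nn deg f))⁻¹ * (φ f₁ * κ) ^ (nn deg f))) *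
        (φ g * (((φ f₁) ^ (nn deg g))⁻¹ * (φ f₁ * κ) ^ (nn deg g)))
    rw [hm, map_mul φ f g, hgdec]
    exact aux_id _ _ _ _ _ _ (B_comm hf₁ φ κ hc (nn deg f) _ hkg)

lemma tw_apply (f : F) :
    tw hf₁ φ κ hc f = φ f * (((φ f₁) ^ (nn deg f))⁻¹ * (φ f₁ * κ) ^ (nn deg f)) := rfl

lemma tw_ker (k : F) (hk : k ∈ deg.ker) : tw hf₁ φ κ hc k = φ k := by
  rw [tw_apply, mem_ker_iff.mp hk]
  simp

lemma tw_f₁ : tw hf₁ φ κ hc f₁ = φ f₁ * κ := by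
  have h1 : nn deg f₁ = 1 := by rw [nn, hf₁]; rfl
  rw [tw_apply, h1]
  group


omit hf₁ in
lemma hcK {φ : F →* G} {κ : G} (hκ : κ ∈ Kgrp H deg φ) :
    ∀ k ∈ deg.ker, Commute κ (φ k) := hκ.2

omit hf₁ in
lemma Kgrp_conj_mem {φ : F →* G} {x : G} (hx : x ∈ Kgrp H deg φ) (f : F) :
    φ f * x * (φ f)⁻¹ ∈ Kgrp H deg φ := by
  obtain ⟨h1, h2⟩ := hx
  refine ⟨fun f' => ?_, fun k hk => ?_⟩
  · have hm := h1 (f' * f)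
    rw [map_mul] at hm
    have e : φ f' * (φ f * x * (φ f)⁻¹) * (φ f')⁻¹ = (φ f' * φ f) * x * (φ f' * φ f)⁻¹ := by
      group
    rw [e]
    exact hm
  · have hk' : f⁻¹ * k * f ∈ deg.ker := by simpa using ker_conj hk f⁻¹
    have h := (h2 _ hk').eq
    have hd : φ k = φ f * φ (f⁻¹ * k * f) * (φ f)⁻¹ := by
      rw [← map_inv, ← map_mul, ← map_mul]; congr 1; group
    show (φ f * x * (φ f)⁻¹) * φ k = φ k * (φ f * x * (φ f)⁻¹)
    rw [hd]
    calc (φ f * x * (φ f)⁻¹) * (φ f * φ (f⁻¹ * k * f) * (φ f)⁻¹)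
        = φ f * (x * φ (f⁻¹ * k * f)) * (φ f)⁻¹ := by group
      _ = φ f * (φ (f⁻¹ * k * f) * x) * (φ f)⁻¹ := by rw [h]
      _ = (φ f * φ (f⁻¹ * k * f) * (φ f)⁻¹) * (φ f * x * (φ f)⁻¹) := by group

include hf₁ in
lemma Kgrp_conj_f₁ {φ : F →* G} {x : G} (hx : x ∈ Kgrp H deg φ) :
    φ f₁ * x * (φ f₁)⁻¹ ∈ Kgrp H deg φ := Kgrp_conj_mem H hx f₁

include hf₁ in
lemma Kgrp_conj_f₁' {φ : F →* G} {x : G} (hx : x ∈ Kgrp H deg φ) :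
    (φ f₁)⁻¹ * x * φ f₁ ∈ Kgrp H deg φ := by
  have := Kgrp_conj_mem H hx f₁⁻¹
  rw [map_inv] at this
  simpa using this

include hf₁ in
lemma B_mem {φ : F →* G} {κ : G} (hκ : κ ∈ Kgrp H deg φ) (n : ℤ) :
    ((φ f₁) ^ n)⁻¹ * (φ f₁ * κ) ^ n ∈ Kgrp H deg φ := by
  induction n using Int.induction_on with
  | zero => simpa using (Kgrp H deg φ).one_mem
  | succ n ih =>
    have e : ((φ f₁) ^ ((n : ℤ) + 1))⁻¹ * (φ f₁ * κ) ^ ((n : ℤ) + 1) =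
        ((φ f₁)⁻¹ * (((φ f₁) ^ (n : ℤ))⁻¹ * (φ f₁ * κ) ^ (n : ℤ)) * φ f₁) * κ := by
      rw [zpow_add_one, zpow_add_one]; group
    rw [e]
    exact (Kgrp H deg φ).mul_mem (Kgrp_conj_f₁' H hf₁ ih) hκ
  | pred n ih =>
    have e : ((φ f₁) ^ (-(n : ℤ) - 1))⁻¹ * (φ f₁ * κ) ^ (-(n : ℤ) - 1) =
        φ f₁ * ((((φ f₁) ^ (-(n : ℤ)))⁻¹ * (φ f₁ * κ) ^ (-(n : ℤ))) * κ⁻¹) * (φ f₁)⁻¹ := by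
      rw [show (-(n : ℤ) - 1) = (-(n:ℤ)) - 1 from rfl, zpow_sub_one, zpow_sub_one]; group
    rw [e]
    exact Kgrp_conj_f₁ H hf₁ ((Kgrp H deg φ).mul_mem ih ((Kgrp H deg φ).inv_mem hκ))

include hf₁ in
lemma K_le_K_tw {φ : F →* G} {κ : G} (hκ : κ ∈ Kgrp H deg φ) :
    Kgrp H deg φ ≤ Kgrp H deg (tw hf₁ φ κ (hcK H hκ)) := by
  intro x hx
  refine ⟨fun f => ?_, fun k hk => ?_⟩
  · have hy : (((φ f₁) ^ (nn deg f))⁻¹ * (φ f₁ * κ) ^ (nn deg f)) * x *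
        (((φ f₁) ^ (nn deg f))⁻¹ * (φ f₁ * κ) ^ (nn deg f))⁻¹ ∈ Kgrp H deg φ := by
      refine (Kgrp H deg φ).mul_mem ((Kgrp H deg φ).mul_mem (B_mem H hf₁ hκ _) hx) ?_
      exact (Kgrp H deg φ).inv_mem (B_mem H hf₁ hκ _)
    have e : tw hf₁ φ κ (hcK H hκ) f * x * (tw hf₁ φ κ (hcK H hκ) f)⁻¹ =
        φ f * ((((φ f₁) ^ (nn deg f))⁻¹ * (φ f₁ * κ) ^ (nn deg f)) * x *
          (((φ f₁) ^ (nn deg f))⁻¹ * (φ f₁ * κ) ^ (nn deg f))⁻¹) * (φ f)⁻¹ := by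
      rw [tw_apply]; group
    rw [e]
    exact hy.1 f
  · rw [tw_ker hf₁ φ κ (hcK H hκ) k hk]
    exact hx.2 k hk

lemma tw_one (φ : F →* G) (hc : ∀ k ∈ deg.ker, Commute (1 : G) (φ k)) :
    tw hf₁ φ 1 hc = φ := by
  ext f
  rw [tw_apply]
  simp

lemma tw_tw (φ : F →* G) (κ κ' : G) (hc : ∀ k ∈ deg.ker, Commute κ (φ k))
    (hc'' : ∀ k ∈ deg.ker, Commute κ' (tw hf₁ φ κ hc k))
    (hc''' : ∀ k ∈ deg.ker, Commute (κ * κ') (φ k)) :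
    tw hf₁ (tw hf₁ φ κ hc) κ' hc'' = tw hf₁ φ (κ * κ') hc''' := by
  refine hom_ext hf₁ (fun k hk => ?_) ?_
  · rw [tw_ker hf₁ _ _ _ k hk, tw_ker hf₁ _ _ _ k hk, tw_ker hf₁ _ _ _ k hk]
  · rw [tw_f₁, tw_f₁, tw_f₁, mul_assoc]

/-- conjugation of a homomorphism -/
def cj (h : G) (ψ : F →* G) : F →* G := (MulAut.conj h⁻¹).toMonoidHom.comp ψ

omit hf₁ in
lemma cj_apply (h : G) (ψ : F →* G) (f : F) : cj h ψ f = h⁻¹ * ψ f * h := by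
  simp [cj]

omit hf₁ in
lemma cj_cj (h h' : G) (ψ : F →* G) : cj h' (cj h ψ) = cj (h * h') ψ := by
  ext f
  simp only [cj_apply]
  group

omit hf₁ in
lemma cj_one (ψ : F →* G) : cj 1 ψ = ψ := by
  ext f
  simp [cj_apply]

omit hf₁ in
lemma cj_cancel {a b : G} {X Y : F →* G} (h : cj a X = cj b Y) : cj (a * b⁻¹) X = Y := by
  have : cj b⁻¹ (cj a X) = cj b⁻¹ (cj b Y) := by rw [h]
  rwa [cj_cj, cj_cj, mul_inv_cancel, cj_one] at this

omit hf₁ in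
lemma conj_mem_iff {h y : G} (hh : h ∈ H) : h * y * h⁻¹ ∈ H ↔ y ∈ H := by
  constructor
  · intro hy
    have := H.mul_mem (H.mul_mem (H.inv_mem hh) hy) hh
    have e : h⁻¹ * (h * y * h⁻¹) * h = y := by group
    rwa [e] at this
  · intro hy
    exact H.mul_mem (H.mul_mem hh hy) (H.inv_mem hh)

omit hf₁ in
lemma commute_conj_iff (c a b : G) : Commute (c * a * c⁻¹) (c * b * c⁻¹) ↔ Commute a b := by
  constructor
  · intro h
    have e1 : a * b = c⁻¹ * ((c * a * c⁻¹) * (c * b * c⁻¹)) * c := by group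
    have e2 : b * a = c⁻¹ * ((c * b * c⁻¹) * (c * a * c⁻¹)) * c := by group
    show a * b = b * a
    rw [e1, e2, h.eq]
  · intro h
    have e1 : (c * a * c⁻¹) * (c * b * c⁻¹) = c * (a * b) * c⁻¹ := by group
    have e2 : (c * b * c⁻¹) * (c * a * c⁻¹) = c * (b * a) * c⁻¹ := by group
    show _ * _ = _ * _
    rw [e1, e2, h.eq]

omit hf₁ in
lemma K_cj {h : G} (hh : h ∈ H) (ψ : F →* G) {x : G} :
    x ∈ Kgrp H deg (cj h ψ) ↔ h * x * h⁻¹ ∈ Kgrp H deg ψ := by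
  have key : ∀ f, (cj h ψ) f * x * ((cj h ψ) f)⁻¹ =
      h⁻¹ * (ψ f * (h * x * h⁻¹) * (ψ f)⁻¹) * (h⁻¹)⁻¹ := fun f => by rw [cj_apply]; group
  have memiff : ∀ f, ((cj h ψ) f * x * ((cj h ψ) f)⁻¹ ∈ H) ↔
      (ψ f * (h * x * h⁻¹) * (ψ f)⁻¹ ∈ H) := fun f => by
    rw [key f]; exact conj_mem_iff H (H.inv_mem hh)
  have key2 : ∀ k : F, ψ k = h * ((cj h ψ) k) * h⁻¹ := fun k => by rw [cj_apply]; group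
  have c2 : ∀ k : F, (Commute x ((cj h ψ) k) ↔ Commute (h * x * h⁻¹) (ψ k)) := fun k => by
    rw [key2 k]; exact (commute_conj_iff h x _).symm
  constructor
  · rintro ⟨h1, h2⟩
    exact ⟨fun f => (memiff f).mp (h1 f), fun k hk => (c2 k).mp (h2 k hk)⟩
  · rintro ⟨h1, h2⟩
    exact ⟨fun f => (memiff f).mpr (h1 f), fun k hk => (c2 k).mpr (h2 k hk)⟩

include hf₁ in
lemma tw_inv_self {φ : F →* G} {κ : G} (hκ : κ ∈ Kgrp H deg φ)
    (hc'' : ∀ k ∈ deg.ker, Commute κ⁻¹ (tw hf₁ φ κ (hcK H hκ) k)) :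
    tw hf₁ (tw hf₁ φ κ (hcK H hκ)) κ⁻¹ hc'' = φ := by
  refine hom_ext hf₁ (fun k hk => ?_) ?_
  · rw [tw_ker hf₁ _ _ _ k hk, tw_ker hf₁ _ _ _ k hk]
  · rw [tw_f₁, tw_f₁]; group

include hf₁ in
lemma K_tw_eq {φ : F →* G} {κ : G} (hκ : κ ∈ Kgrp H deg φ) :
    Kgrp H deg (tw hf₁ φ κ (hcK H hκ)) = Kgrp H deg φ := by
  apply le_antisymm
  · have hκ' : κ⁻¹ ∈ Kgrp H deg (tw hf₁ φ κ (hcK H hκ)) :=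
      (Kgrp H deg _).inv_mem (K_le_K_tw H hf₁ hκ hκ)
    have h2 := K_le_K_tw H hf₁ hκ'
    rwa [tw_inv_self H hf₁ hκ (hcK H hκ')] at h2
  · exact K_le_K_tw H hf₁ hκ

lemma cj_tw (h : G) (ψ : F →* G) (μ : G) (hc : ∀ k ∈ deg.ker, Commute μ (ψ k))
    (hc' : ∀ k ∈ deg.ker, Commute (h⁻¹ * μ * h) ((cj h ψ) k)) :
    cj h (tw hf₁ ψ μ hc) = tw hf₁ (cj h ψ) (h⁻¹ * μ * h) hc' := by
  refine hom_ext hf₁ (fun k hk => ?_) ?_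
  · rw [cj_apply, tw_ker hf₁ _ _ _ k hk, tw_ker hf₁ _ _ _ k hk, cj_apply]
  · rw [cj_apply, tw_f₁, tw_f₁, cj_apply]
    group

omit hf₁ in
lemma commute_of_mem_K {ψ : F →* G} {g : G} (hg : g ∈ Kgrp H deg ψ)
    (k : F) (hk : k ∈ deg.ker) : g⁻¹ * ψ k * g = ψ k := by
  have h := (hg.2 k hk).eq
  calc g⁻¹ * ψ k * g = g⁻¹ * (g * ψ k) := by rw [mul_assoc, ← h]
    _ = ψ k := by group

include hf₁ in
lemma tw_zpow (ψ : F →* G) (κ : G) (hc : ∀ k ∈ deg.ker, Commute κ (ψ k)) (m : ℤ) :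
    tw hf₁ ψ κ hc (f₁ ^ m) = (ψ f₁ * κ) ^ m := by
  rw [tw_apply, nn_zpow hf₁, map_zpow]
  group

include hf₁ in
/-- the stabilizer is contained in the core -/
lemma StabK {ψ : F →* G} {g κ κ₀ : G} (hg : g ∈ H) (hκ : κ ∈ Kgrp H deg ψ)
    (hκ₀ : κ₀ ∈ Kgrp H deg ψ)
    (heq : cj g (tw hf₁ ψ κ (hcK H hκ)) = tw hf₁ ψ κ₀ (hcK H hκ₀)) :
    g ∈ Kgrp H deg ψ := by
  have hker : ∀ k ∈ deg.ker, Commute g (ψ k) := by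
    intro k hk
    have h1 := congrArg (fun ρ : F →* G => ρ k) heq
    simp only [cj_apply] at h1
    rw [tw_ker hf₁ _ _ _ k hk, tw_ker hf₁ _ _ _ k hk] at h1
    show g * ψ k = ψ k * g
    have e : ψ k * g = g * (g⁻¹ * ψ k * g) := by group
    rw [e, h1]
  refine ⟨fun f => ?_, hker⟩
  -- the power identity
  have hpow : ∀ m : ℤ, g⁻¹ * (ψ f₁ * κ) ^ m * g = (ψ f₁ * κ₀) ^ m := by
    intro m
    have h1 := congrArg (fun ρ : F →* G => ρ (f₁ ^ m)) heq
    simp only [cj_apply] at h1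
    rw [tw_zpow hf₁ ψ κ, tw_zpow hf₁ ψ κ₀] at h1
    exact h1
  set n := nn deg f with hn
  set k := f * f₁ ^ (-n) with hkdef
  have hk : k ∈ deg.ker := decomp_mem_ker hf₁ f
  have hψf : ψ f = ψ k * (ψ f₁) ^ n := by
    rw [hkdef, map_mul, map_zpow]
    group
  -- A^m = c^m * B(m)
  have hAB : ∀ m : ℤ, (ψ f₁ * κ) ^ m = (ψ f₁) ^ m * (((ψ f₁) ^ m)⁻¹ * (ψ f₁ * κ) ^ m) := by
    intro m; group
  have e2 : (ψ f₁) ^ n * g * ((ψ f₁) ^ n)⁻¹ =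
      (((ψ f₁) ^ (-n))⁻¹ * (ψ f₁ * κ) ^ (-n)) * g *
        ((((ψ f₁) ^ (-n))⁻¹ * (ψ f₁ * κ₀) ^ (-n)))⁻¹ := by
    have h3 := hpow (-n)
    rw [hAB (-n), show (ψ f₁ * κ₀) ^ (-n) =
      (ψ f₁) ^ (-n) * (((ψ f₁) ^ (-n))⁻¹ * (ψ f₁ * κ₀) ^ (-n)) from by group] at h3
    -- h3 : g⁻¹ * (c^(-n) * B) * g = c^(-n) * B₀
    have h4 : (((ψ f₁) ^ (-n))⁻¹ * (ψ f₁ * κ₀) ^ (-n)) =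
        ((ψ f₁) ^ (-n))⁻¹ * (g⁻¹ * ((ψ f₁) ^ (-n) *
          (((ψ f₁) ^ (-n))⁻¹ * (ψ f₁ * κ) ^ (-n))) * g) := by
      rw [h3]
      group
    rw [h4]
    group
  have hBmem := B_mem H hf₁ hκ (-n)
  have hBmem₀ := B_mem H hf₁ hκ₀ (-n)
  have efinal : ψ f * g * (ψ f)⁻¹ =
      (ψ k * ((((ψ f₁) ^ (-n))⁻¹ * (ψ f₁ * κ) ^ (-n))) * (ψ k)⁻¹) *
        (ψ k * g * (ψ k)⁻¹) *
        (ψ k * ((((ψ f₁) ^ (-n))⁻¹ * (ψ f₁ * κ₀) ^ (-n)))⁻¹ * (ψ k)⁻¹) := by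
    rw [hψf]
    have e3 : ψ k * (ψ f₁) ^ n * g * (ψ k * (ψ f₁) ^ n)⁻¹ =
        ψ k * ((ψ f₁) ^ n * g * ((ψ f₁) ^ n)⁻¹) * (ψ k)⁻¹ := by group
    rw [e3, e2]
    group
  rw [efinal]
  have m2 : ψ k * g * (ψ k)⁻¹ ∈ H := by
    have h := (hker k hk).eq
    have e : ψ k * g * (ψ k)⁻¹ = g * (ψ k * (ψ k)⁻¹) := by
      rw [← mul_assoc, ← h]
    rw [e]; simpa using hg
  have m3 : ψ k * ((((ψ f₁) ^ (-n))⁻¹ * (ψ f₁ * κ₀) ^ (-n)))⁻¹ * (ψ k)⁻¹ ∈ H :=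
    ((Kgrp H deg ψ).inv_mem hBmem₀).1 k
  exact H.mul_mem (H.mul_mem (hBmem.1 k) m2) m3

include hf₁ in
lemma StabK' {ψ : F →* G} {g κ₀ : G} (hg : g ∈ Kgrp H deg ψ) (hκ₀ : κ₀ ∈ Kgrp H deg ψ) :
    (ψ f₁)⁻¹ * g * ψ f₁ * κ₀ * g⁻¹ ∈ Kgrp H deg ψ :=
  (Kgrp H deg ψ).mul_mem ((Kgrp H deg ψ).mul_mem (Kgrp_conj_f₁' H hf₁ hg) hκ₀)
    ((Kgrp H deg ψ).inv_mem hg)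

include hf₁ in
lemma StabK'' {ψ : F →* G} {g κ₀ : G} (hg : g ∈ Kgrp H deg ψ) (hκ₀ : κ₀ ∈ Kgrp H deg ψ)
    (hc : ∀ k ∈ deg.ker, Commute ((ψ f₁)⁻¹ * g * ψ f₁ * κ₀ * g⁻¹) (ψ k)) :
    cj g (tw hf₁ ψ ((ψ f₁)⁻¹ * g * ψ f₁ * κ₀ * g⁻¹) hc) = tw hf₁ ψ κ₀ (hcK H hκ₀) := by
  refine hom_ext hf₁ (fun k hk => ?_) ?_
  · rw [cj_apply, tw_ker hf₁ _ _ _ k hk, tw_ker hf₁ _ _ _ k hk]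
    exact commute_of_mem_K H hg k hk
  · rw [cj_apply, tw_f₁, tw_f₁]
    group

open Classical in
/-- proof-free twist -/
noncomputable def twc (φ : F →* G) (κ : G) : F →* G :=
  if hc : ∀ k ∈ deg.ker, Commute κ (φ k) then tw hf₁ φ κ hc else 1

include hf₁ in
lemma twc_eq {φ : F →* G} {κ : G} (hc : ∀ k ∈ deg.ker, Commute κ (φ k)) :
    twc hf₁ φ κ = tw hf₁ φ κ hc := dif_pos hc

include hf₁ in
lemma twc_one (φ : F →* G) : twc hf₁ φ 1 = φ := by
  rw [twc_eq hf₁ (fun k _ => Commute.one_left _), tw_one]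

include hf₁ in
lemma twc_ker {φ : F →* G} {κ : G} (hc : ∀ k ∈ deg.ker, Commute κ (φ k))
    {k : F} (hk : k ∈ deg.ker) : twc hf₁ φ κ k = φ k := by
  rw [twc_eq hf₁ hc, tw_ker hf₁ _ _ _ k hk]

include hf₁ in
lemma twc_f₁ {φ : F →* G} {κ : G} (hc : ∀ k ∈ deg.ker, Commute κ (φ k)) :
    twc hf₁ φ κ f₁ = φ f₁ * κ := by
  rw [twc_eq hf₁ hc, tw_f₁]

include hf₁ in
lemma cj_twc (h : G) {ψ : F →* G} {μ : G} (hc : ∀ k ∈ deg.ker, Commute μ (ψ k)) :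
    cj h (twc hf₁ ψ μ) = twc hf₁ (cj h ψ) (h⁻¹ * μ * h) := by
  have hc' : ∀ k ∈ deg.ker, Commute (h⁻¹ * μ * h) ((cj h ψ) k) := fun k hk => by
    rw [cj_apply]
    simpa using ((commute_conj_iff h⁻¹ μ (ψ k)).mpr (hc k hk))
  rw [twc_eq hf₁ hc, twc_eq hf₁ hc']
  exact cj_tw hf₁ h _ _ _ _

include hf₁ in
lemma twc_twc {φ : F →* G} {κ κ' : G} (hκ : κ ∈ Kgrp H deg φ)
    (hc' : ∀ k ∈ deg.ker, Commute κ' (φ k)) :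
    twc hf₁ (twc hf₁ φ κ) κ' = twc hf₁ φ (κ * κ') := by
  have hc'' : ∀ k ∈ deg.ker, Commute κ' ((twc hf₁ φ κ) k) := fun k hk => by
    rw [twc_ker hf₁ (hcK H hκ) hk]; exact hc' k hk
  have hc''' : ∀ k ∈ deg.ker, Commute (κ * κ') (φ k) := fun k hk =>
    ((hcK H hκ k hk).mul_left (hc' k hk))
  rw [twc_eq hf₁ hc''', twc_eq hf₁ (hcK H hκ), twc_eq hf₁ (show ∀ k ∈ deg.ker,
    Commute κ' ((tw hf₁ φ κ (hcK H hκ)) k) from by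
      intro k hk; rw [tw_ker hf₁ _ _ _ k hk]; exact hc' k hk)]
  exact tw_tw hf₁ φ _ _ _ _ _

include hf₁ in
lemma K_twc_eq {φ : F →* G} {κ : G} (hκ : κ ∈ Kgrp H deg φ) :
    Kgrp H deg (twc hf₁ φ κ) = Kgrp H deg φ := by
  rw [twc_eq hf₁ (hcK H hκ)]
  exact K_tw_eq H hf₁ hκ

include hf₁ in
lemma StabKc {ψ : F →* G} {g κ κ₀ : G} (hg : g ∈ H) (hκ : κ ∈ Kgrp H deg ψ)
    (hκ₀ : κ₀ ∈ Kgrp H deg ψ) (heq : cj g (twc hf₁ ψ κ) = twc hf₁ ψ κ₀) :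
    g ∈ Kgrp H deg ψ := by
  rw [twc_eq hf₁ (hcK H hκ), twc_eq hf₁ (hcK H hκ₀)] at heq
  exact StabK H hf₁ hg hκ hκ₀ heq

include hf₁ in
lemma StabKc' {ψ : F →* G} {g κ₀ : G} (hg : g ∈ Kgrp H deg ψ) (hκ₀ : κ₀ ∈ Kgrp H deg ψ) :
    cj g (twc hf₁ ψ ((ψ f₁)⁻¹ * g * ψ f₁ * κ₀ * g⁻¹)) = twc hf₁ ψ κ₀ := by
  have hmem := StabK' H hf₁ hg hκ₀
  rw [twc_eq hf₁ (hcK H hmem), twc_eq hf₁ (hcK H hκ₀)]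
  exact StabK'' H hf₁ hg hκ₀ _

include hf₁ in
/-- The superblock of a homomorphism. -/
def SB (φ : F →* G) : Set (F →* G) :=
  Set.range (fun p : H × (Kgrp H deg φ) => cj (p.1 : G) (twc hf₁ φ (p.2 : G)))

include hf₁ in
lemma mem_SB {φ ψ : F →* G} : ψ ∈ SB H hf₁ φ ↔
    ∃ (h : G) (κ : G), h ∈ H ∧ κ ∈ Kgrp H deg φ ∧ ψ = cj h (twc hf₁ φ κ) := by
  constructor
  · rintro ⟨⟨h, κ⟩, rfl⟩
    exact ⟨h, κ, h.2, κ.2, rfl⟩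
  · rintro ⟨h, κ, hh, hκ, rfl⟩
    exact ⟨(⟨h, hh⟩, ⟨κ, hκ⟩), rfl⟩

include hf₁ in
lemma SB_refl (φ : F →* G) : φ ∈ SB H hf₁ φ := by
  rw [mem_SB]
  exact ⟨1, 1, H.one_mem, (Kgrp H deg φ).one_mem, by rw [twc_one, cj_one]⟩

include hf₁ in
lemma SB_trans {φ ψ χ : F →* G} (h1 : χ ∈ SB H hf₁ ψ) (h2 : ψ ∈ SB H hf₁ φ) :
    χ ∈ SB H hf₁ φ := by
  rw [mem_SB] at h1 h2 ⊢
  obtain ⟨h', κ', hh', hκ', rfl⟩ := h1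
  obtain ⟨h, κ, hh, hκ, rfl⟩ := h2
  have hκ₂K : h * κ' * h⁻¹ ∈ Kgrp H deg φ := by
    have := (K_cj H hh _).mp hκ'
    rwa [K_twc_eq H hf₁ hκ] at this
  have hκ₂tw : h * κ' * h⁻¹ ∈ Kgrp H deg (twc hf₁ φ κ) := by
    rw [K_twc_eq H hf₁ hκ]; exact hκ₂K
  have hmul : κ * (h * κ' * h⁻¹) ∈ Kgrp H deg φ := (Kgrp H deg φ).mul_mem hκ hκ₂K
  refine ⟨h * h', κ * (h * κ' * h⁻¹), H.mul_mem hh hh', hmul, ?_⟩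
  have e1 : cj h (twc hf₁ (twc hf₁ φ κ) (h * κ' * h⁻¹)) =
      twc hf₁ (cj h (twc hf₁ φ κ)) κ' := by
    rw [cj_twc hf₁ h (hcK H hκ₂tw), show h⁻¹ * (h * κ' * h⁻¹) * h = κ' from by group]
  have e3 : twc hf₁ (twc hf₁ φ κ) (h * κ' * h⁻¹) = twc hf₁ φ (κ * (h * κ' * h⁻¹)) :=
    twc_twc H hf₁ hκ (hcK H hκ₂K)
  rw [← e1, e3, cj_cj]

include hf₁ in
lemma SB_symm {φ ψ : F →* G} (h1 : ψ ∈ SB H hf₁ φ) : φ ∈ SB H hf₁ ψ := by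
  rw [mem_SB] at h1 ⊢
  obtain ⟨h, κ, hh, hκ, rfl⟩ := h1
  have hκinv : κ⁻¹ ∈ Kgrp H deg (twc hf₁ φ κ) := by
    rw [K_twc_eq H hf₁ hκ]; exact (Kgrp H deg φ).inv_mem hκ
  have hμ : h⁻¹ * κ⁻¹ * h ∈ Kgrp H deg (cj h (twc hf₁ φ κ)) := by
    rw [K_cj H hh, show h * (h⁻¹ * κ⁻¹ * h) * h⁻¹ = κ⁻¹ from by group]
    exact hκinv
  refine ⟨h⁻¹, h⁻¹ * κ⁻¹ * h, H.inv_mem hh, hμ, ?_⟩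
  have e2 : cj h⁻¹ (twc hf₁ (cj h (twc hf₁ φ κ)) (h⁻¹ * κ⁻¹ * h)) =
      twc hf₁ (cj h⁻¹ (cj h (twc hf₁ φ κ))) (h⁻¹⁻¹ * (h⁻¹ * κ⁻¹ * h) * h⁻¹) :=
    cj_twc hf₁ h⁻¹ (hcK H hμ)
  rw [e2, cj_cj, mul_inv_cancel, cj_one,
    show h⁻¹⁻¹ * (h⁻¹ * κ⁻¹ * h) * h⁻¹ = κ⁻¹ from by group,
    twc_twc H hf₁ hκ (hcK H ((Kgrp H deg φ).inv_mem hκ)), mul_inv_cancel, twc_one]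

include hf₁ in
lemma SB_congr {φ ψ : F →* G} (h1 : ψ ∈ SB H hf₁ φ) : SB H hf₁ ψ = SB H hf₁ φ := by
  apply Set.eq_of_subset_of_subset
  · intro χ hχ
    exact SB_trans H hf₁ hχ h1
  · intro χ hχ
    exact SB_trans H hf₁ hχ (SB_symm H hf₁ h1)

include hf₁ in
lemma SB_finite [Fintype G] (φ : F →* G) : (SB H hf₁ φ).Finite := Set.finite_range _

include hf₁ in
lemma SB_card [Fintype G] (φ : F →* G) : Nat.card (SB H hf₁ φ) = Nat.card H := by
  classical
  set K := Kgrp H deg φ with hK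
  let Θ : H × K → (SB H hf₁ φ) := fun p => ⟨cj (p.1 : G) (twc hf₁ φ (p.2 : G)), ⟨p, rfl⟩⟩
  have key : ∀ χ : SB H hf₁ φ, Nonempty ({p : H × K // Θ p = χ} ≃ K) := by
    intro χ
    obtain ⟨p₀, hp₀⟩ := χ.2
    have hfp : ∀ p : H × K, (Θ p = χ) ↔
        cj (p.1 : G) (twc hf₁ φ (p.2 : G)) = (χ : F →* G) := fun p => Subtype.ext_iff
    have heq0 : ∀ (p : H × K), Θ p = χ →
        cj ((p.1 : G) * (p₀.1 : G)⁻¹) (twc hf₁ φ (p.2 : G)) = twc hf₁ φ (p₀.2 : G) := by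
      intro p hp
      apply cj_cancel
      rw [(hfp p).mp hp, ← hp₀]
    refine ⟨⟨fun q => ⟨(q.1.1 : G) * (p₀.1 : G)⁻¹, ?_⟩, fun g => ⟨(⟨(g : G) * (p₀.1 : G),
      H.mul_mem (Kgrp_le H deg g.2) p₀.1.2⟩,
      ⟨(φ f₁)⁻¹ * (g : G) * φ f₁ * (p₀.2 : G) * (g : G)⁻¹, StabK' H hf₁ g.2 p₀.2.2⟩), ?_⟩,
      ?_, ?_⟩⟩
    · exact StabKc H hf₁ (H.mul_mem q.1.1.2 (H.inv_mem p₀.1.2)) q.1.2.2 p₀.2.2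
        (heq0 q.1 q.2)
    · rw [hfp]
      have e1 : cj ((g : G) * (p₀.1 : G)) (twc hf₁ φ
          ((φ f₁)⁻¹ * (g : G) * φ f₁ * (p₀.2 : G) * (g : G)⁻¹)) =
          cj (p₀.1 : G) (cj (g : G) (twc hf₁ φ
            ((φ f₁)⁻¹ * (g : G) * φ f₁ * (p₀.2 : G) * (g : G)⁻¹))) := by
        rw [cj_cj]
      rw [e1, StabKc' H hf₁ g.2 p₀.2.2, ← hp₀]
    · rintro ⟨⟨h1, κ1⟩, hp⟩
      have heq := heq0 _ hp
      have hg : ((h1 : G) * (p₀.1 : G)⁻¹) ∈ K :=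
        StabKc H hf₁ (H.mul_mem h1.2 (H.inv_mem p₀.1.2)) κ1.2 p₀.2.2 heq
      have hκval : (φ f₁)⁻¹ * ((h1 : G) * (p₀.1 : G)⁻¹) * φ f₁ * (p₀.2 : G) *
          ((h1 : G) * (p₀.1 : G)⁻¹)⁻¹ = (κ1 : G) := by
        have hEv := congrArg (fun ρ : F →* G => ρ f₁) heq
        simp only [cj_apply] at hEv
        rw [twc_f₁ hf₁ (hcK H κ1.2), twc_f₁ hf₁ (hcK H p₀.2.2)] at hEv
        have hκ₀v : (p₀.2 : G) = (φ f₁)⁻¹ * (((h1 : G) * (p₀.1 : G)⁻¹)⁻¹ *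
            (φ f₁ * (κ1 : G)) * ((h1 : G) * (p₀.1 : G)⁻¹)) := by
          rw [hEv]; group
        rw [hκ₀v]; group
      refine Subtype.ext (Prod.ext (Subtype.ext ?_) (Subtype.ext ?_))
      · show ((h1 : G) * (p₀.1 : G)⁻¹) * (p₀.1 : G) = (h1 : G)
        group
      · exact hκval
    · intro g
      refine Subtype.ext ?_
      show (g : G) * (p₀.1 : G) * (p₀.1 : G)⁻¹ = (g : G)
      group
  have hNE : Nonempty K := ⟨⟨1, (Kgrp H deg φ).one_mem⟩⟩
  have hpos : 0 < Nat.card K := Nat.card_pos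
  have e0 : (Σ χ : SB H hf₁ φ, {p : H × K // Θ p = χ}) ≃ (H × K) := Equiv.sigmaFiberEquiv Θ
  have e1 : (Σ χ : SB H hf₁ φ, {p : H × K // Θ p = χ}) ≃ ((SB H hf₁ φ) × K) :=
    (Equiv.sigmaCongrRight fun χ => (key χ).some).trans (Equiv.sigmaEquivProd _ _)
  have hcards : Nat.card (SB H hf₁ φ) * Nat.card K = Nat.card H * Nat.card K := by
    rw [← Nat.card_prod, ← Nat.card_prod, ← Nat.card_congr e1, Nat.card_congr e0]
  exact Nat.eq_of_mul_eq_mul_right hpos hcards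

end KMProof

open KMProof in
lemma partition_dvd {α : Type*} [DecidableEq α] (n : ℕ) (R : α → Finset α)
    (hmem : ∀ a, a ∈ R a) (heq : ∀ a b, b ∈ R a → R b = R a)
    (hcard : ∀ a, (R a).card = n) :
    ∀ s : Finset α, (∀ a ∈ s, R a ⊆ s) → n ∣ s.card := by
  intro s
  induction s using Finset.strongInduction with
  | _ s ih =>
    intro hclosed
    rcases Finset.eq_empty_or_nonempty s with rfl | ⟨a, ha⟩
    · simp
    · have hRa : R a ⊆ s := hclosed a ha
      have hss : s \ R a ⊂ s := Finset.sdiff_ssubset hRa ⟨a, hmem a⟩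
      have hclosed' : ∀ b ∈ s \ R a, R b ⊆ s \ R a := by
        intro b hb c hc
        rw [Finset.mem_sdiff] at hb ⊢
        refine ⟨hclosed b hb.1 hc, fun hcRa => ?_⟩
        have h1 : R c = R a := heq a c hcRa
        have h2 : R c = R b := heq b c hc
        exact hb.2 (h1 ▸ h2.symm ▸ hmem b)
      have hdvd1 := ih (s \ R a) hss hclosed'
      have hsplit : (s \ R a).card + (R a).card = s.card :=
        Finset.card_sdiff_add_card_eq_card hRa
      rw [← hsplit]
      exact dvd_add hdvd1 (hcard a ▸ dvd_refl n)


/-- Main theorem of [KM17] (the `n = 0` case of the paper's main theorem). -/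
theorem km_main_theorem (F G : Type*) [Group F] [Group G] [Fintype G]
    (H : Subgroup G) (deg : F →* Multiplicative ℤ) (hdeg : Function.Surjective deg)
    (Φ : Set (F →* G))
    (hI : ∀ h ∈ H, ∀ φ ∈ Φ, ((MulAut.conj h⁻¹).toMonoidHom.comp φ) ∈ Φ)
    (hII : ∀ φ ∈ Φ, ∀ h ∈ phiCore H deg φ, ∀ f₁ : F,
      deg f₁ = Multiplicative.ofAdd (1 : ℤ) →
      ∀ ψ : F →* G, (∀ f ∈ deg.ker, ψ f = φ f) → ψ f₁ = φ f₁ * h → ψ ∈ Φ) :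
    Nat.card H ∣ Nat.card Φ := by
  classical
  open KMProof in
  obtain ⟨f₁, hf₁⟩ := hdeg (Multiplicative.ofAdd 1)
  by_cases hfin : Φ.Finite
  · set R : (F →* G) → Finset (F →* G) := fun ψ => (SB_finite H hf₁ ψ).toFinset with hR
    have hmem : ∀ ψ, ψ ∈ R ψ := fun ψ => (Set.Finite.mem_toFinset _).mpr (SB_refl H hf₁ ψ)
    have heqR : ∀ a b, b ∈ R a → R b = R a := by
      intro a b hb
      have hb' : b ∈ SB H hf₁ a := (Set.Finite.mem_toFinset _).mp hb
      have := SB_congr H hf₁ hb'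
      simp only [hR]
      ext c
      rw [Set.Finite.mem_toFinset, Set.Finite.mem_toFinset, this]
    have hcard : ∀ ψ, (R ψ).card = Nat.card H := by
      intro ψ
      have h1 : (R ψ).card = Nat.card (SB H hf₁ ψ) :=
        (Nat.card_coe_set_eq _ ▸ Set.ncard_eq_toFinset_card _ (SB_finite H hf₁ ψ)).symm
      rw [h1, SB_card H hf₁ ψ]
    have hclosed : ∀ φ ∈ hfin.toFinset, R φ ⊆ hfin.toFinset := by
      intro φ hφF ψ hψ
      have hφ : φ ∈ Φ := (Set.Finite.mem_toFinset _).mp hφF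
      have hψ' : ψ ∈ SB H hf₁ φ := (Set.Finite.mem_toFinset _).mp hψ
      rw [mem_SB] at hψ'
      obtain ⟨h, κ, hh, hκ, rfl⟩ := hψ'
      have step1 : twc hf₁ φ κ ∈ Φ :=
        hII φ hφ κ hκ f₁ hf₁ (twc hf₁ φ κ)
          (fun k hk => twc_ker hf₁ (hcK H hκ) hk) (twc_f₁ hf₁ (hcK H hκ))
      exact (Set.Finite.mem_toFinset _).mpr (hI h hh _ step1)
    have hdvd := partition_dvd (Nat.card H) R hmem heqR hcard hfin.toFinset hclosed
    have hΦcard : Nat.card Φ = hfin.toFinset.card :=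
      Nat.card_coe_set_eq _ ▸ Set.ncard_eq_toFinset_card _ hfin
    rw [hΦcard]
    exact hdvd
  · have : Nat.card Φ = 0 := by
      have hinf : Φ.Infinite := hfin
      have := hinf.to_subtype
      exact Nat.card_eq_zero_of_infinite
    rw [this]
    exact dvd_zero _
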